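/- For any odd positive integers k and l, the paperfolding values satisfy f_k + f_l ≡ f_{kl} (mod 2). -/
import Mathlib


/-- The odd part of a natural number: `n / 2 ^ v₂(n)`. -/
def oddPart (n : ℕ) : ℕ := n / 2 ^ (n.factorization 2)

/-- The `m`-th level paperfolding sequence:
`f n = (1/2) ⌊(k - 1) mod 2^(m+1)⌋` where `k` is the odd part of `n`. -/
def paperfold (m n : ℕ) : ℕ := ((oddPart n - 1) % 2 ^ (m + 1)) / 2

lemma oddPart_of_odd {n : ℕ} (h : Odd n) : oddPart n = n := by
  have h2 : ¬ (2 ∣ n) := by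
    have := Nat.odd_iff.mp h
    omega
  unfold oddPart
  rw [Nat.factorization_eq_zero_of_not_dvd h2]
  simp

lemma half_mod {m a : ℕ} : ((2 * a) % 2 ^ (m + 1)) / 2 = a % 2 ^ m := by
  rw [pow_succ, mul_comm (2 ^ m) 2, Nat.mul_mod_mul_left, Nat.mul_div_cancel_left _ (by norm_num)]

/-- for odd positive integers `k, l`,
`f k + f l ≡ f (k*l) (mod 2)`. -/
theorem paperfold_mul_odd (m : ℕ) (hm : 1 ≤ m) (k l : ℕ)
    (hk : 1 ≤ k) (hl : 1 ≤ l) (hk' : Odd k) (hl' : Odd l) :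
    paperfold m k + paperfold m l ≡ paperfold m (k * l) [MOD 2] := by
  obtain ⟨a, ha⟩ := hk'
  obtain ⟨b, hb⟩ := hl'
  have hkl : Odd (k * l) := by
    rw [ha, hb]; exact ⟨2 * a * b + a + b, by ring⟩
  unfold paperfold
  rw [oddPart_of_odd (ha ▸ ⟨a, ha.symm ▸ rfl⟩), oddPart_of_odd (hb ▸ ⟨b, rfl⟩),
    oddPart_of_odd hkl]
  have e1 : k - 1 = 2 * a := by omega
  have e2 : l - 1 = 2 * b := by omega
  have e3 : k * l - 1 = 2 * (a + b + 2 * (a * b)) := by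
    rw [ha, hb]; ring_nf; omega
  rw [e1, e2, e3, half_mod, half_mod, half_mod]
  have hd : (2 : ℕ) ∣ 2 ^ m := dvd_pow_self 2 (by omega)
  unfold Nat.ModEq
  rw [Nat.add_mod, Nat.mod_mod_of_dvd _ hd, Nat.mod_mod_of_dvd _ hd, Nat.mod_mod_of_dvd _ hd,
    Nat.add_mul_mod_self_left]
  omega
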